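/- arXiv:1306.4019 — 2 statements merged into one kernel-verified Lean document; each statement's English description precedes it below -/
import Mathlib

section
/- For Re(s) strictly between 1/2 and 1 and x > 0, the integral ∫₀^∞ u^{-s} (u + 2x)^{-s} du equals x^{1-2s} · Γ(1-s) Γ(s - 1/2) / (2√π). -/
open Complex MeasureTheory Set


lemma cpow_div_aux {a b : ℝ} (ha : 0 < a) (hb : 0 < b) (s : ℂ) :
    ((a / b : ℝ) : ℂ) ^ (-s) = (a : ℂ) ^ (-s) * (b : ℂ) ^ s := by
  rw [div_eq_mul_inv, Complex.ofReal_mul, mul_cpow_ofReal_nonneg ha.le (inv_nonneg.2 hb.le),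
    Complex.ofReal_inv, inv_cpow _ _ (by rw [Complex.arg_ofReal_of_nonneg hb.le]; positivity),
    ← Complex.cpow_neg, neg_neg]

lemma key_beta (s : ℂ) (hs1 : 1/2 < s.re) (hs2 : s.re < 1) :
    ∫ t in Ioi (0:ℝ), (t : ℂ) ^ (-s) * (1 + (t : ℂ)) ^ (-s) =
      Complex.Gamma (1 - s) * Complex.Gamma (2 * s - 1) / Complex.Gamma s := by
  have himg : (fun v : ℝ => v / (1 - v)) '' Ioo 0 1 = Ioi (0:ℝ) := by
    ext y
    constructor
    · rintro ⟨v, ⟨hv0, hv1⟩, rfl⟩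
      exact div_pos hv0 (by linarith)
    · intro hy
      refine ⟨y / (1 + y), ⟨div_pos hy (by linarith [mem_Ioi.mp hy]), ?_⟩, ?_⟩
      · rw [div_lt_one (by linarith [mem_Ioi.mp hy])]; linarith [mem_Ioi.mp hy]
      · have h1 : (0:ℝ) < 1 + y := by linarith [mem_Ioi.mp hy]
        field_simp
        ring
  have hderiv : ∀ v ∈ Ioo (0:ℝ) 1, HasDerivWithinAt (fun v : ℝ => v / (1 - v))
      (((1 - v) ^ 2)⁻¹) (Ioo 0 1) v := by
    intro v hv
    have h1 : (1 : ℝ) - v ≠ 0 := by simp only [mem_Ioo] at hv; intro h; linarith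
    have := (hasDerivAt_id v).div ((hasDerivAt_id v).const_sub 1) h1
    refine this.hasDerivWithinAt.congr_deriv ?_
    simp only [id]
    ring
  have hinj : InjOn (fun v : ℝ => v / (1 - v)) (Ioo 0 1) := by
    intro a ha b hb h
    simp only [mem_Ioo] at ha hb
    have ha1 : (1:ℝ) - a ≠ 0 := by intro h'; linarith [ha.2]
    have hb1 : (1:ℝ) - b ≠ 0 := by intro h'; linarith [hb.2]
    field_simp at h
    linarith
  have := integral_image_eq_integral_abs_deriv_smul measurableSet_Ioo hderiv hinj
    (fun u : ℝ => (u : ℂ) ^ (-s) * (1 + (u : ℂ)) ^ (-s))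
  rw [himg] at this
  rw [this]
  have hcongr : ∫ v in Ioo (0:ℝ) 1, |((1 - v) ^ 2)⁻¹| •
        (((v / (1 - v) : ℝ) : ℂ) ^ (-s) * (1 + ((v / (1 - v) : ℝ) : ℂ)) ^ (-s)) =
      ∫ v in Ioo (0:ℝ) 1, (v : ℂ) ^ ((1 - s) - 1) * (1 - (v : ℂ)) ^ ((2 * s - 1) - 1) := by
    refine setIntegral_congr_fun measurableSet_Ioo fun v hv => ?_
    obtain ⟨hv0, hv1⟩ := hv
    have hb : (0:ℝ) < 1 - v := by linarith
    have hb' : ((1 : ℂ) - v) ≠ 0 := by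
      rw [show ((1:ℂ) - v) = ((1 - v : ℝ) : ℂ) by push_cast; ring]
      exact_mod_cast hb.ne'
    have h1 : (1 : ℂ) + ((v / (1 - v) : ℝ) : ℂ) = ((1 / (1 - v) : ℝ) : ℂ) := by
      push_cast [hb.ne']
      field_simp
      ring
    have habs : |((1 - v) ^ 2)⁻¹| = ((1 - v) ^ 2)⁻¹ := abs_of_pos (by positivity)
    have h2 : ((1:ℂ) - v) ^ ((2 * s - 1) - 1) =
        ((1:ℂ) - v) ^ s * ((1:ℂ) - v) ^ s * (((1:ℂ) - v) ^ 2)⁻¹ := by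
      rw [show (2 * s - 1) - 1 = s + s - 2 by ring, Complex.cpow_sub _ _ hb',
        Complex.cpow_add _ _ hb', show ((2:ℂ)) = ((2:ℕ):ℂ) by norm_num,
        Complex.cpow_natCast, div_eq_mul_inv]
    rw [h1, cpow_div_aux hv0 hb s, cpow_div_aux one_pos hb s, habs, real_smul,
      Complex.ofReal_one, Complex.one_cpow, show (1:ℂ) - s - 1 = -s by ring, h2]
    push_cast
    ring
  rw [hcongr]
  have hbeta : Complex.betaIntegral (1 - s) (2 * s - 1) =
      ∫ v in Ioo (0:ℝ) 1, (v : ℂ) ^ ((1 - s) - 1) * (1 - (v : ℂ)) ^ ((2 * s - 1) - 1) := by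
    rw [Complex.betaIntegral, intervalIntegral.integral_of_le zero_le_one,
      MeasureTheory.integral_Ioc_eq_integral_Ioo]
  rw [← hbeta]
  have hre1 : 0 < (1 - s).re := by simp; linarith
  have hre2 : 0 < (2 * s - 1).re := by simp; linarith
  have := Complex.Gamma_mul_Gamma_eq_betaIntegral hre1 hre2
  rw [show (1 - s) + (2 * s - 1) = s by ring] at this
  have hΓ : Complex.Gamma s ≠ 0 := by
    refine Complex.Gamma_ne_zero fun m => ?_
    intro h
    have : s.re = -(m : ℝ) := by rw [h]; simp
    have : (0:ℝ) < -(m:ℝ) := by rw [← this]; linarith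
    have : (0:ℝ) ≤ (m:ℝ) := Nat.cast_nonneg m
    linarith
  rw [this, mul_div_cancel_left₀ _ hΓ]

theorem integral_upow_mul_add_two_x_pow (s : ℂ) (hs1 : 1/2 < s.re) (hs2 : s.re < 1)
    (x : ℝ) (hx : 0 < x) :
    ∫ u in Ioi (0:ℝ), (u : ℂ) ^ (-s) * ((u : ℂ) + 2 * x) ^ (-s) =
      (x : ℂ) ^ (1 - 2 * s) * Complex.Gamma (1 - s) * Complex.Gamma (s - 1/2) /
        (2 * Real.sqrt Real.pi) := by
  set a : ℝ := 2 * x with ha_def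
  have ha : 0 < a := by positivity
  have hac : (a : ℂ) ≠ 0 := by exact_mod_cast ha.ne'
  set g : ℝ → ℂ := fun u => (u : ℂ) ^ (-s) * ((u : ℂ) + 2 * x) ^ (-s) with hg
  have hscale := integral_comp_mul_left_Ioi g 0 ha
  rw [mul_zero] at hscale
  have hmain : ∫ u in Ioi (0:ℝ), g u = a • ∫ t in Ioi (0:ℝ), g (a * t) := by
    rw [hscale, smul_smul, mul_inv_cancel₀ ha.ne', one_smul]
  have hpt : ∫ t in Ioi (0:ℝ), g (a * t) =
      ∫ t in Ioi (0:ℝ), (a : ℂ) ^ (-s + -s) * ((t : ℂ) ^ (-s) * (1 + (t : ℂ)) ^ (-s)) := by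
    refine setIntegral_congr_fun measurableSet_Ioi fun t ht => ?_
    have ht0 : (0:ℝ) < t := ht
    have h1 : ((a * t : ℝ) : ℂ) = (a : ℂ) * (t : ℂ) := by push_cast; ring
    have h2 : ((a * t : ℝ) : ℂ) + 2 * (x : ℝ) = (a : ℂ) * ((1 + t : ℝ) : ℂ) := by
      push_cast [ha_def]; ring
    simp only [hg]
    rw [h2, h1, mul_cpow_ofReal_nonneg ha.le ht0.le,
      mul_cpow_ofReal_nonneg ha.le (by linarith : (0:ℝ) ≤ 1 + t),
      Complex.cpow_add _ _ hac]
    push_cast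
    ring
  rw [hmain, hpt, MeasureTheory.integral_const_mul, key_beta s hs1 hs2, real_smul]
  -- now pure algebra
  have hΓ : Complex.Gamma s ≠ 0 := by
    refine Complex.Gamma_ne_zero fun m => ?_
    intro h
    have : s.re = -(m : ℝ) := by rw [h]; simp
    have h0 : (0:ℝ) ≤ (m:ℝ) := Nat.cast_nonneg m
    linarith [this]
  have hπ : ((Real.sqrt Real.pi : ℝ) : ℂ) ≠ 0 := by
    exact_mod_cast (Real.sqrt_pos.mpr Real.pi_pos).ne'
  have hdup := Complex.Gamma_mul_Gamma_add_half (s - 1/2)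
  rw [show s - 1/2 + 1/2 = s by ring, show 2 * (s - 1/2) = 2 * s - 1 by ring,
    show 1 - (2 * s - 1) = 2 - 2 * s by ring] at hdup
  have h2pow : ((2:ℂ)) ^ (2 - 2 * s) ≠ 0 := by
    simp [Complex.cpow_eq_zero_iff]
  have hΓ2 : Complex.Gamma (2 * s - 1) =
      Complex.Gamma (s - 1/2) * Complex.Gamma s * (((2:ℂ) ^ (2 - 2 * s))⁻¹) *
        ((Real.sqrt Real.pi : ℝ) : ℂ)⁻¹ := by
    rw [hdup]
    field_simp
  have hsplit : (a : ℂ) * (a : ℂ) ^ (-s + -s) = (2:ℂ) ^ (1 - 2 * s) * (x:ℂ) ^ (1 - 2 * s) := by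
    have e1 : (a : ℂ) ^ (1 - 2 * s) = (a : ℂ) * (a : ℂ) ^ (-s + -s) := by
      rw [show (1:ℂ) - 2 * s = 1 + (-s + -s) by ring, Complex.cpow_add _ _ hac,
        Complex.cpow_one]
    rw [← e1, ha_def, show ((2 * x : ℝ) : ℂ) = ((2:ℝ):ℂ) * ((x:ℝ):ℂ) by push_cast; ring,
      mul_cpow_ofReal_nonneg (by norm_num : (0:ℝ) ≤ 2) hx.le]
    norm_num
  have h2rel : ((2:ℂ)) ^ (2 - 2 * s) = (2:ℂ) ^ (1 - 2 * s) * 2 := by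
    rw [show (2:ℂ) - 2 * s = (1 - 2 * s) + 1 by ring, Complex.cpow_add _ _ two_ne_zero,
      Complex.cpow_one]
  rw [hΓ2, ← mul_assoc, hsplit]
  have h2ne : ((2:ℂ)) ^ (1 - 2 * s) ≠ 0 := by simp [Complex.cpow_eq_zero_iff]
  field_simp
  rw [show (2:ℂ) * (1 - s) = 2 - 2 * s by ring, h2rel]
  ring
end

section
/- For x > 0 and τ in the upper half-plane, the theta-like function K(x,τ) = ∑_{(m,n) ∈ ℤ²} exp(-|m + nτ|² π x / τ₂) satisfies the Jacobi inversion formula K(x,τ) = x^{-1} K(x^{-1},τ), where τ₂ = Im τ. -/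
open Complex Real

/-- The theta-like heat kernel on the torus. -/
noncomputable def torusK (x : ℝ) (τ : ℂ) : ℝ :=
  ∑' p : ℤ × ℤ, Real.exp (-(‖(p.1 : ℂ) + (p.2 : ℂ) * τ‖) ^ 2 * π * x / τ.im)

lemma torusK_gauss_summable {c : ℝ} (hc : 0 < c) :
    Summable (fun n : ℤ => rexp (-c * (n : ℝ) ^ 2)) := by
  apply Summable.of_nat_of_neg
  all_goals
  · apply Summable.of_nonneg_of_le (fun n => (Real.exp_pos _).le)
      (fun n => ?_) (summable_geometric_of_lt_one (Real.exp_pos (-c)).le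
        (Real.exp_lt_one_iff.mpr (by linarith)))
    rw [← Real.exp_nat_mul]
    apply Real.exp_le_exp.mpr
    push_cast
    rcases Nat.eq_zero_or_pos n with h | h
    · simp [h]
    · have h1 : (1 : ℝ) ≤ n := by exact_mod_cast h
      nlinarith [mul_nonneg (mul_nonneg hc.le (by linarith : (0:ℝ) ≤ (n:ℝ)))
        (by linarith : (0:ℝ) ≤ (n:ℝ) - 1)]

lemma torusK_quad_lower (m n r t : ℝ) :
    t ^ 2 / (1 + r ^ 2 + t ^ 2) * (m ^ 2 + n ^ 2) ≤ (m + n * r) ^ 2 + (n * t) ^ 2 := by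
  rw [div_mul_eq_mul_div, div_le_iff₀ (by positivity)]
  nlinarith [sq_nonneg ((1 + r ^ 2) * m + r * (1 + r ^ 2 + t ^ 2) * n), sq_nonneg (t ^ 2 * n),
    sq_nonneg (t * m), sq_nonneg (t * n), sq_nonneg m, sq_nonneg n]

lemma torusK_pair_summable {c d : ℝ} (hc : 0 < c) (hd : 0 < d) :
    Summable (fun p : ℤ × ℤ => rexp (-c * (p.1 : ℝ) ^ 2) * rexp (-d * (p.2 : ℝ) ^ 2)) :=
  (torusK_gauss_summable hc).mul_of_nonneg (torusK_gauss_summable hd)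
    (fun _ => (Real.exp_pos _).le) (fun _ => (Real.exp_pos _).le)

lemma torusK_F_summable (x t r : ℝ) (hx : 0 < x) (ht : 0 < t) :
    Summable (fun p : ℤ × ℤ =>
      rexp (-(((p.1 : ℝ) + p.2 * r) ^ 2 + ((p.2 : ℝ) * t) ^ 2) * π * x / t)) := by
  set δ : ℝ := t ^ 2 / (1 + r ^ 2 + t ^ 2) with hδ
  have hδ0 : 0 < δ := by positivity
  have hc : 0 < δ * π * x / t := by positivity
  apply Summable.of_nonneg_of_le (fun p => (Real.exp_pos _).le) (fun p => ?_)
    (torusK_pair_summable hc hc)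
  rw [← Real.exp_add]
  apply Real.exp_le_exp.mpr
  have hq := torusK_quad_lower (p.1 : ℝ) (p.2 : ℝ) r t
  have hrw : -(δ * π * x / t) * (p.1 : ℝ) ^ 2 + -(δ * π * x / t) * (p.2 : ℝ) ^ 2
      = -(δ * ((p.1 : ℝ) ^ 2 + (p.2 : ℝ) ^ 2)) * π * x / t := by ring
  rw [hrw, div_le_div_iff_of_pos_right]
  · nlinarith [mul_pos Real.pi_pos hx]
  · exact ht

lemma torusK_G_summable (x t r : ℝ) (hx : 0 < x) (ht : 0 < t) :
    Summable (fun q : ℤ × ℤ => cexp (-(π * t * x) * (q.1 : ℂ) ^ 2 - (π * t / x) * (q.2 : ℂ) ^ 2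
      - 2 * π * I * q.1 * q.2 * r)) := by
  rw [← summable_norm_iff]
  have h : ∀ q : ℤ × ℤ, ‖cexp (-(π * t * x) * (q.1 : ℂ) ^ 2 - (π * t / x) * (q.2 : ℂ) ^ 2
      - 2 * π * I * q.1 * q.2 * r)‖
      = rexp (-(π * t * x) * (q.1 : ℝ) ^ 2) * rexp (-(π * t / x) * (q.2 : ℝ) ^ 2) := by
    intro q
    rw [show (-(π * t * x) * (q.1 : ℂ) ^ 2 - (π * t / x) * (q.2 : ℂ) ^ 2
        - 2 * π * I * q.1 * q.2 * r)
        = ((-(π * t * x) * (q.1 : ℝ) ^ 2 + -(π * t / x) * (q.2 : ℝ) ^ 2 : ℝ) : ℂ)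
          + ((-(2 * π * q.1 * q.2 * r) : ℝ) : ℂ) * I by push_cast; ring]
    rw [Complex.exp_add, norm_mul, Complex.norm_exp_ofReal_mul_I, mul_one,
      ← Complex.ofReal_exp, Complex.norm_real, Real.norm_eq_abs, Real.abs_exp, Real.exp_add]
  exact (summable_congr h).mpr (torusK_pair_summable (by positivity) (by positivity))

lemma torusK_key (x t r : ℝ) (hx : 0 < x) (ht : 0 < t) :
    ((∑' p : ℤ × ℤ, rexp (-(((p.1 : ℝ) + p.2 * r) ^ 2 + ((p.2 : ℝ) * t) ^ 2) * π * x / t) : ℝ) : ℂ)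
      = (Real.sqrt (t / x) : ℂ) *
        ∑' q : ℤ × ℤ, cexp (-(π * t * x) * (q.1 : ℂ) ^ 2 - (π * t / x) * (q.2 : ℂ) ^ 2
          - 2 * π * I * q.1 * q.2 * r) := by
  have htc : (t : ℂ) ≠ 0 := ofReal_ne_zero.mpr ht.ne'
  have hxc : (x : ℂ) ≠ 0 := ofReal_ne_zero.mpr hx.ne'
  have hFc : Summable (fun p : ℤ × ℤ =>
      cexp ((-(((p.1 : ℝ) + p.2 * r) ^ 2 + ((p.2 : ℝ) * t) ^ 2) * π * x / t : ℝ))) := by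
    apply Summable.of_norm
    simp only [Complex.norm_exp, Complex.ofReal_re]
    exact torusK_F_summable x t r hx ht
  have hswap : Summable (fun p : ℤ × ℤ =>
      cexp ((-(((p.2 : ℝ) + p.1 * r) ^ 2 + ((p.1 : ℝ) * t) ^ 2) * π * x / t : ℝ))) :=
    (Equiv.prodComm ℤ ℤ).summable_iff.mpr hFc
  have hsqrt : (((t / x : ℝ)) : ℂ) ^ (1 / 2 : ℂ) = ((Real.sqrt (t / x) : ℝ) : ℂ) := by
    rw [Real.sqrt_eq_rpow, Complex.ofReal_cpow (by positivity)]; norm_num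
  have hne : ((Real.sqrt (t / x) : ℝ) : ℂ) ≠ 0 :=
    ofReal_ne_zero.mpr (Real.sqrt_ne_zero'.mpr (by positivity))
  have inner : ∀ n : ℤ, (∑' m : ℤ,
      cexp ((-(((m : ℝ) + n * r) ^ 2 + ((n : ℝ) * t) ^ 2) * π * x / t : ℝ)))
      = (Real.sqrt (t / x) : ℂ) * ∑' m : ℤ,
          cexp (-(π * t * x) * (n : ℂ) ^ 2 - (π * t / x) * (m : ℂ) ^ 2
            - 2 * π * I * n * m * r) := by
    intro n
    have ha : (0 : ℝ) < (((t / x : ℝ)) : ℂ).re := by simpa using div_pos ht hx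
    have hq := Complex.tsum_exp_neg_quadratic ha (-(I * ((n : ℂ) * r)))
    simp_rw [show ∀ m : ℤ, ((m : ℂ) + I * (-(I * ((n : ℂ) * r)))) = (m : ℂ) + n * r by
      intro m; rw [mul_neg, ← mul_assoc, I_mul_I, neg_mul, neg_neg, one_mul], hsqrt] at hq
    have hstep : (∑' m : ℤ, cexp (-(π : ℂ) / ((t / x : ℝ) : ℂ) * ((m : ℂ) + n * r) ^ 2))
        = ((Real.sqrt (t / x) : ℝ) : ℂ) * ∑' m : ℤ,
            cexp (-(π : ℂ) * ((t / x : ℝ) : ℂ) * (m : ℂ) ^ 2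
              + 2 * π * (-(I * ((n : ℂ) * r))) * m) := by
      rw [hq, ← mul_assoc, mul_one_div, div_self hne, one_mul]
    calc (∑' m : ℤ, cexp ((-(((m : ℝ) + n * r) ^ 2 + ((n : ℝ) * t) ^ 2) * π * x / t : ℝ)))
        = ∑' m : ℤ, cexp (-(π : ℂ) / ((t / x : ℝ) : ℂ) * ((m : ℂ) + n * r) ^ 2)
            * cexp (-((π : ℂ) * x * t) * (n : ℂ) ^ 2) := by
          refine tsum_congr fun m => ?_
          rw [← Complex.exp_add]
          congr 1
          push_cast
          field_simp
          ring
      _ = (∑' m : ℤ, cexp (-(π : ℂ) / ((t / x : ℝ) : ℂ) * ((m : ℂ) + n * r) ^ 2))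
            * cexp (-((π : ℂ) * x * t) * (n : ℂ) ^ 2) := tsum_mul_right
      _ = ((Real.sqrt (t / x) : ℝ) : ℂ) * ((∑' m : ℤ,
            cexp (-(π : ℂ) * ((t / x : ℝ) : ℂ) * (m : ℂ) ^ 2
              + 2 * π * (-(I * ((n : ℂ) * r))) * m))
            * cexp (-((π : ℂ) * x * t) * (n : ℂ) ^ 2)) := by rw [hstep, mul_assoc]
      _ = (Real.sqrt (t / x) : ℂ) * ∑' m : ℤ,
            cexp (-(π * t * x) * (n : ℂ) ^ 2 - (π * t / x) * (m : ℂ) ^ 2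
              - 2 * π * I * n * m * r) := by
          congr 1
          rw [← tsum_mul_right]
          refine tsum_congr fun m => ?_
          rw [← Complex.exp_add]
          congr 1
          push_cast
          field_simp
          ring
  calc ((∑' p : ℤ × ℤ,
        rexp (-(((p.1 : ℝ) + p.2 * r) ^ 2 + ((p.2 : ℝ) * t) ^ 2) * π * x / t) : ℝ) : ℂ)
      = ∑' p : ℤ × ℤ,
          cexp ((-(((p.1 : ℝ) + p.2 * r) ^ 2 + ((p.2 : ℝ) * t) ^ 2) * π * x / t : ℝ)) := by
        rw [Complex.ofReal_tsum]; exact tsum_congr fun p => by rw [Complex.ofReal_exp]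
    _ = ∑' p : ℤ × ℤ,
          cexp ((-(((p.2 : ℝ) + p.1 * r) ^ 2 + ((p.1 : ℝ) * t) ^ 2) * π * x / t : ℝ)) := by
        rw [← Equiv.tsum_eq (Equiv.prodComm ℤ ℤ)
          (fun p : ℤ × ℤ => cexp ((-(((p.1 : ℝ) + p.2 * r) ^ 2 + ((p.2 : ℝ) * t) ^ 2)
            * π * x / t : ℝ)))]
        rfl
    _ = ∑' (n : ℤ) (m : ℤ),
          cexp ((-(((m : ℝ) + n * r) ^ 2 + ((n : ℝ) * t) ^ 2) * π * x / t : ℝ)) :=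
        Summable.tsum_prod hswap
    _ = ∑' n : ℤ, (Real.sqrt (t / x) : ℂ) * ∑' m : ℤ,
          cexp (-(π * t * x) * (n : ℂ) ^ 2 - (π * t / x) * (m : ℂ) ^ 2
            - 2 * π * I * n * m * r) := tsum_congr inner
    _ = (Real.sqrt (t / x) : ℂ) * ∑' (n : ℤ) (m : ℤ),
          cexp (-(π * t * x) * (n : ℂ) ^ 2 - (π * t / x) * (m : ℂ) ^ 2
            - 2 * π * I * n * m * r) := tsum_mul_left
    _ = (Real.sqrt (t / x) : ℂ) *
          ∑' q : ℤ × ℤ, cexp (-(π * t * x) * (q.1 : ℂ) ^ 2 - (π * t / x) * (q.2 : ℂ) ^ 2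
            - 2 * π * I * q.1 * q.2 * r) := by
        rw [Summable.tsum_prod (torusK_G_summable x t r hx ht)]

theorem jacobi_inversion (x : ℝ) (hx : 0 < x) (τ : ℂ) (hτ : 0 < τ.im) :
    torusK x τ = x⁻¹ * torusK x⁻¹ τ := by
  set t : ℝ := τ.im with htdef
  set r : ℝ := τ.re with hrdef
  have habs : ∀ (y : ℝ), torusK y τ
      = ∑' p : ℤ × ℤ, rexp (-(((p.1 : ℝ) + p.2 * r) ^ 2 + ((p.2 : ℝ) * t) ^ 2) * π * y / t) := by
    intro y
    refine tsum_congr fun p => ?_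
    have habs2 : (‖(p.1 : ℂ) + (p.2 : ℂ) * τ‖) ^ 2
        = ((p.1 : ℝ) + p.2 * r) ^ 2 + ((p.2 : ℝ) * t) ^ 2 := by
      rw [Complex.sq_norm, Complex.normSq_apply]
      simp only [Complex.add_re, Complex.add_im, Complex.intCast_re, Complex.intCast_im,
        Complex.mul_re, Complex.mul_im, htdef, hrdef]
      ring
    rw [habs2]
  rw [← Complex.ofReal_inj, habs x, habs x⁻¹, Complex.ofReal_mul,
    torusK_key x t r hx hτ, torusK_key x⁻¹ t r (inv_pos.mpr hx) hτ]
  have hGsym : (∑' q : ℤ × ℤ, cexp (-(π * t * x⁻¹) * (q.1 : ℂ) ^ 2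
        - (π * t / x⁻¹) * (q.2 : ℂ) ^ 2 - 2 * π * I * q.1 * q.2 * r))
      = ∑' q : ℤ × ℤ, cexp (-(π * t * x) * (q.1 : ℂ) ^ 2 - (π * t / x) * (q.2 : ℂ) ^ 2
        - 2 * π * I * q.1 * q.2 * r) := by
    rw [← Equiv.tsum_eq (Equiv.prodComm ℤ ℤ) (fun q : ℤ × ℤ =>
      cexp (-(π * t * x⁻¹) * (q.1 : ℂ) ^ 2 - (π * t / x⁻¹) * (q.2 : ℂ) ^ 2
        - 2 * π * I * q.1 * q.2 * r))]
    refine tsum_congr fun q => ?_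
    simp only [Equiv.prodComm_apply, Prod.fst_swap, Prod.snd_swap]
    congr 1
    have hxc : (x : ℂ) ≠ 0 := ofReal_ne_zero.mpr hx.ne'
    push_cast
    field_simp
    ring
  have hs : (Real.sqrt (t / x) : ℝ) = x⁻¹ * Real.sqrt (t / x⁻¹) := by
    rw [show t / x⁻¹ = t * x by field_simp,
      show (x : ℝ)⁻¹ = Real.sqrt (x⁻¹ ^ 2) by rw [Real.sqrt_sq (by positivity)],
      ← Real.sqrt_mul (by positivity), show x⁻¹ ^ 2 * (t * x) = t / x by field_simp]
  rw [hGsym, hs]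
  push_cast
  ring
end
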